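/- arXiv:2308.13395 — 5 statements merged into one kernel-verified Lean document; each statement's English description precedes it below -/
import Mathlib

section
/- Let f ∈ R = A[X; θ, δ] be monic of degree n with f = h·g = g·ħ where the leading coefficient of ħ is invertible in A (so that ħ is not a left zero divisor in R). Then a polynomial w ∈ R of degree < n satisfies: the coset of w lies in the code 𝒞 = Rg/Rf if and only if w·ħ ∈ Rf, i.e., w·ħ ≡ 0 in R/Rf. -/
/-- The skew polynomial ring `R = A[X; θ, δ]`: a ring `R` together with a coefficient
embedding `C : A →+* R` and an indeterminate `X` satisfying the commutation rule
`X * C a = C (θ a) * X + C (δ a)`, such that every element of `R` is, in a unique way,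
a left polynomial `Σᵢ C aᵢ * X ^ i`. -/
structure SkewPolyRing (A : Type*) [Ring A] (θ : A →+* A) (δ : A →+ A)
    (R : Type*) [Ring R] where
  /-- embedding of the coefficient ring -/
  C : A →+* R
  /-- the indeterminate -/
  X : R
  /-- the commutation rule `X·a = θ(a)·X + δ(a)` -/
  X_mul : ∀ a : A, X * C a = C (θ a) * X + C (δ a)
  /-- every element of `R` is uniquely a left polynomial in `X` -/
  equiv : (ℕ →₀ A) ≃ R
  equiv_apply : ∀ p : ℕ →₀ A, equiv p = p.sum fun i a => C a * X ^ i

namespace SkewPolyRing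

variable {A : Type*} [Ring A] {θ : A →+* A} {δ : A →+ A} {R : Type*} [Ring R]

/-- the `i`-th coefficient of a skew polynomial -/
noncomputable def coeff (S : SkewPolyRing A θ δ R) (f : R) (i : ℕ) : A :=
  S.equiv.symm f i

/-- the degree of a skew polynomial (the degree of `0` is `⊥ = -∞`) -/
noncomputable def deg (S : SkewPolyRing A θ δ R) (f : R) : WithBot ℕ :=
  (S.equiv.symm f).support.max

/-- the degree of a skew polynomial, as a natural number -/
noncomputable def natDeg (S : SkewPolyRing A θ δ R) (f : R) : ℕ :=
  WithBot.unbotD 0 (S.deg f)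

/-- the leading coefficient of a skew polynomial -/
noncomputable def lc (S : SkewPolyRing A θ δ R) (f : R) : A :=
  S.coeff f (S.natDeg f)

end SkewPolyRing

namespace SkewPolyRing

variable {A : Type*} [Ring A] {θ : A →+* A} {δ : A →+ A} {R : Type*} [Ring R]
variable (S : SkewPolyRing A θ δ R)

theorem equiv_add (p q : ℕ →₀ A) : S.equiv (p + q) = S.equiv p + S.equiv q := by
  rw [S.equiv_apply, S.equiv_apply, S.equiv_apply]
  exact Finsupp.sum_add_index' (fun i => by simp) (fun i a b => by rw [map_add, add_mul])

theorem symm_add (x y : R) : S.equiv.symm (x + y) = S.equiv.symm x + S.equiv.symm y := by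
  rw [Equiv.symm_apply_eq, equiv_add, Equiv.apply_symm_apply, Equiv.apply_symm_apply]

theorem equiv_zero : S.equiv 0 = 0 := by
  rw [S.equiv_apply]; simp

theorem symm_zero : S.equiv.symm 0 = 0 := by
  rw [Equiv.symm_apply_eq, equiv_zero]

theorem coeff_zero' (k : ℕ) : S.coeff 0 k = 0 := by
  rw [coeff, symm_zero]; rfl

theorem coeff_add (x y : R) (k : ℕ) :
    S.coeff (x + y) k = S.coeff x k + S.coeff y k := by
  rw [coeff, coeff, coeff, symm_add]; rfl

theorem coeff_C_mul (a : A) (x : R) (k : ℕ) :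
    S.coeff (S.C a * x) k = a * S.coeff x k := by
  have key : S.C a * x = S.equiv ((S.equiv.symm x).mapRange (a * ·) (mul_zero a)) := by
    conv_lhs => rw [← S.equiv.apply_symm_apply x]
    rw [S.equiv_apply, S.equiv_apply, Finsupp.mul_sum,
      Finsupp.sum_mapRange_index (fun i => by simp)]
    exact Finsupp.sum_congr fun i _ => by rw [← mul_assoc, ← map_mul]
  rw [coeff, key, Equiv.symm_apply_apply, Finsupp.mapRange_apply, coeff]

theorem X_mul_eq (x : R) :
    S.X * x = S.equiv
      (Finsupp.embDomain ⟨Nat.succ, Nat.succ_injective⟩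
        ((S.equiv.symm x).mapRange θ θ.map_zero)
      + (S.equiv.symm x).mapRange δ δ.map_zero) := by
  rw [equiv_add]
  conv_lhs => rw [← S.equiv.apply_symm_apply x]
  rw [S.equiv_apply, S.equiv_apply, S.equiv_apply, Finsupp.mul_sum,
    Finsupp.sum_embDomain, Finsupp.sum_mapRange_index (fun i => by simp),
    Finsupp.sum_mapRange_index (fun i => by simp), ← Finsupp.sum_add]
  refine Finsupp.sum_congr fun i _ => ?_
  show S.X * (S.C _ * S.X ^ i) = _
  rw [← mul_assoc, S.X_mul, add_mul, mul_assoc]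
  simp [Function.Embedding.coeFn_mk, pow_succ']

theorem coeff_X_mul_succ (x : R) (k : ℕ) :
    S.coeff (S.X * x) (k + 1) = θ (S.coeff x k) + δ (S.coeff x (k + 1)) := by
  rw [coeff, X_mul_eq, Equiv.symm_apply_apply, Finsupp.add_apply]
  have : (k + 1 : ℕ) = (⟨Nat.succ, Nat.succ_injective⟩ : ℕ ↪ ℕ) k := rfl
  rw [this, Finsupp.embDomain_apply_self, Finsupp.mapRange_apply, Finsupp.mapRange_apply]
  rfl

theorem coeff_X_mul_zero (x : R) :
    S.coeff (S.X * x) 0 = δ (S.coeff x 0) := by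
  rw [coeff, X_mul_eq, Equiv.symm_apply_apply, Finsupp.add_apply,
    Finsupp.embDomain_notin_range, Finsupp.mapRange_apply, zero_add]
  · rfl
  · rintro ⟨i, hi⟩
    exact Nat.succ_ne_zero i hi

theorem coeff_eq_zero_of_natDeg_lt (x : R) (k : ℕ) (hk : S.natDeg x < k) :
    S.coeff x k = 0 := by
  by_contra hc
  have hmem : k ∈ (S.equiv.symm x).support := Finsupp.mem_support_iff.mpr hc
  have hle : (k : WithBot ℕ) ≤ S.deg x := Finset.le_max hmem
  cases hd : S.deg x with
  | bot => rw [hd] at hle; exact absurd hle (by simp)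
  | coe m =>
    rw [hd] at hle
    have hle : k ≤ m := WithBot.coe_le_coe.mp hle
    have : S.natDeg x = m := by rw [natDeg, hd]; rfl
    omega

theorem lc_ne_zero (x : R) (hx : x ≠ 0) : S.lc x ≠ 0 := by
  have hne : S.equiv.symm x ≠ 0 := fun hc => hx (by
    have := congrArg S.equiv hc
    rwa [Equiv.apply_symm_apply, equiv_zero] at this)
  have hsupp : (S.equiv.symm x).support.Nonempty := by
    rwa [Finsupp.support_nonempty_iff]
  obtain ⟨m, hm⟩ := Finset.max_of_nonempty hsupp
  have hmm : m ∈ (S.equiv.symm x).support := Finset.mem_of_max hm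
  have : S.natDeg x = m := by rw [natDeg, deg, hm]; rfl
  rw [lc, this, coeff]
  exact Finsupp.mem_support_iff.mp hmm

theorem coeff_Xpow_mul (x : R) (d : ℕ) (hx : ∀ k, d < k → S.coeff x k = 0) (i : ℕ) :
    (∀ k, i + d < k → S.coeff (S.X ^ i * x) k = 0) ∧
      S.coeff (S.X ^ i * x) (i + d) = (θ ^ i) (S.coeff x d) := by
  induction i with
  | zero =>
    simp only [pow_zero, one_mul, zero_add]
    exact ⟨hx, rfl⟩
  | succ i ih =>
    have hrw : S.X ^ (i + 1) * x = S.X * (S.X ^ i * x) := by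
      rw [pow_succ', mul_assoc]
    constructor
    · intro k hk
      rw [hrw]
      match k, hk with
      | (j + 1), hk =>
        rw [coeff_X_mul_succ, ih.1 j (by omega), ih.1 (j + 1) (by omega),
          map_zero, map_zero, add_zero]
    · rw [hrw]
      have : i + 1 + d = (i + d) + 1 := by omega
      rw [this, coeff_X_mul_succ, ih.1 (i + d + 1) (by omega), map_zero, add_zero,
        ih.2, pow_succ' θ i]
      rfl

theorem coeff_mul_top (x y : R) (m d : ℕ)
    (hx : ∀ k, m < k → S.coeff x k = 0) (hy : ∀ k, d < k → S.coeff y k = 0) :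
    S.coeff (x * y) (m + d) = S.coeff x m * (θ ^ m) (S.coeff y d) := by
  have hxe : x = S.equiv (S.equiv.symm x) := (S.equiv.apply_symm_apply x).symm
  have key : x * y = ((S.equiv.symm x).sum fun i a => S.C a * (S.X ^ i * y)) := by
    conv_lhs => rw [hxe, S.equiv_apply, Finsupp.sum_mul]
    exact Finsupp.sum_congr fun i _ => by rw [mul_assoc]
  rw [key, Finsupp.sum]
  rw [show ((S.equiv.symm x).support.sum fun i => S.C ((S.equiv.symm x) i) * (S.X ^ i * y))
      = _ from rfl]
  have hcoeff : ∀ (s : Finset ℕ) (F : ℕ → R),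
      S.coeff (s.sum F) (m + d) = s.sum fun i => S.coeff (F i) (m + d) := by
    intro s F
    classical
    induction s using Finset.induction with
    | empty => simp [coeff_zero']
    | insert _ _ hni ih => rw [Finset.sum_insert hni, Finset.sum_insert hni, coeff_add, ih]
  rw [hcoeff]
  have hsupport : ∀ i ∈ (S.equiv.symm x).support, i ≤ m := by
    intro i hi
    by_contra hc
    exact Finsupp.mem_support_iff.mp hi (hx i (by omega))
  rw [Finset.sum_eq_single m]
  · rw [coeff_C_mul, (S.coeff_Xpow_mul y d hy m).2]; rfl
  · intro i hi hne
    have : i < m := lt_of_le_of_ne (hsupport i hi) hne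
    rw [coeff_C_mul, (S.coeff_Xpow_mul y d hy i).1 (m + d) (by omega), mul_zero]
  · intro hm
    have : S.coeff x m = 0 := Finsupp.notMem_support_iff.mp hm
    rw [coeff_C_mul]
    show (S.equiv.symm x) m * _ = 0
    rw [show (S.equiv.symm x) m = S.coeff x m from rfl, this, zero_mul]

theorem mul_right_cancel_of_isUnit_lc (y : R) (hlc : IsUnit (S.lc y))
    (x : R) (hxy : x * y = 0) : x = 0 := by
  by_contra hx
  have hx' : ∀ k, S.natDeg x < k → S.coeff x k = 0 := S.coeff_eq_zero_of_natDeg_lt x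
  have hy' : ∀ k, S.natDeg y < k → S.coeff y k = 0 := S.coeff_eq_zero_of_natDeg_lt y
  have := S.coeff_mul_top x y (S.natDeg x) (S.natDeg y) hx' hy'
  rw [hxy, coeff_zero'] at this
  have hunit : IsUnit ((θ ^ S.natDeg x) (S.lc y)) := hlc.map _
  have : S.coeff x (S.natDeg x) = 0 :=
    (IsUnit.mul_left_eq_zero hunit).mp this.symm
  exact S.lc_ne_zero x hx this

end SkewPolyRing


/-- Let `f ∈ R = A[X; θ, δ]` be monic of degree `n` with
`f = h * g = g * ħ` where the leading coefficient of `ħ` is invertible in `A`.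
Then a polynomial `w` of degree `< n` represents a codeword of `𝒞 = Rg/Rf`
(i.e. `w ∈ Rg`) if and only if `w * ħ ∈ Rf`, i.e. `w * ħ ≡ 0` in `R/Rf`. -/
theorem mem_code_iff_mul_hbar_mem
    {A R : Type*} [Ring A] [Nontrivial A] [Ring R]
    (θ : A →+* A) (δ : A →+ A)
    (hδ : ∀ a b : A, δ (a * b) = δ a * b + θ a * δ b)
    (S : SkewPolyRing A θ δ R)
    (f g h hbar : R) (n : ℕ)
    (hdegf : S.deg f = (n : WithBot ℕ)) (hmf : S.coeff f n = 1)
    (h1 : f = h * g) (h2 : f = g * hbar)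
    (hlc : IsUnit (S.lc hbar)) :
    ∀ w : R, S.deg w < (n : WithBot ℕ) →
      ((∃ u : R, w = u * g) ↔ ∃ q : R, w * hbar = q * f) := by
  intro w _hw
  constructor
  · rintro ⟨u, rfl⟩
    exact ⟨u, by rw [mul_assoc, ← h2]⟩
  · rintro ⟨q, hq⟩
    refine ⟨q, ?_⟩
    have h0 : (w - q * g) * hbar = 0 := by
      rw [sub_mul, hq, h2, mul_assoc, sub_self]
    have := S.mul_right_cancel_of_isUnit_lc hbar hlc _ h0
    have := sub_eq_zero.mp this
    exact this
end

section
/- Let A be a finite ring, f ∈ R = A[X; θ, δ] monic of degree n with f = h·g = g·ħ, deg(g) = n−k, deg(ħ) = k, and the leading coefficient of ħ invertible in A. Define the n × n matrix M over A whose i-th row (i = 1, …, n) is the coefficient vector of the remainder of X^{i−1}·ħ under right division by f. Then the vector representation C ⊆ Aⁿ of the code 𝒞 = Rg/Rf equals the left kernel of M: C = { w ∈ Aⁿ : w·M = 0 }. -/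
namespace SkewAux

variable {A : Type*} [Ring A] {θ : A →+* A} {δ : A →+ A} {R : Type*} [Ring R]
variable (S : SkewPolyRing A θ δ R)

lemma equiv_add (p q : ℕ →₀ A) : S.equiv (p + q) = S.equiv p + S.equiv q := by
  simp only [S.equiv_apply]
  rw [Finsupp.sum_add_index] <;> simp [add_mul]

lemma equiv_zero : S.equiv 0 = 0 := by
  simp [S.equiv_apply]

lemma symm_zero : S.equiv.symm 0 = 0 := by
  rw [← equiv_zero S, Equiv.symm_apply_apply]

lemma symm_add (x y : R) : S.equiv.symm (x + y) = S.equiv.symm x + S.equiv.symm y := by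
  apply S.equiv.injective
  rw [equiv_add]
  simp

/-- coeff as an additive hom -/
noncomputable def coeffHom (i : ℕ) : R →+ A where
  toFun x := S.coeff x i
  map_zero' := by simp [SkewPolyRing.coeff, symm_zero]
  map_add' x y := by simp [SkewPolyRing.coeff, symm_add]

lemma coeffHom_apply (i : ℕ) (x : R) : coeffHom S i x = S.coeff x i := rfl

lemma symm_monomial (a : A) (i : ℕ) :
    S.equiv.symm (S.C a * S.X ^ i) = Finsupp.single i a := by
  apply S.equiv.injective
  rw [Equiv.apply_symm_apply, S.equiv_apply, Finsupp.sum_single_index]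
  simp

lemma coeff_monomial (a : A) (i m : ℕ) :
    S.coeff (S.C a * S.X ^ i) m = if i = m then a else 0 := by
  rw [SkewPolyRing.coeff, symm_monomial, Finsupp.single_apply]

/-- reconstruction -/
lemma eq_sum_range (x : R) (N : ℕ) (hN : ∀ j, N ≤ j → S.coeff x j = 0) :
    x = ∑ j ∈ Finset.range N, S.C (S.coeff x j) * S.X ^ j := by
  conv_lhs => rw [← S.equiv.apply_symm_apply x]
  rw [S.equiv_apply]
  rw [Finsupp.sum_of_support_subset _ ?_ _ (by simp)]
  · rfl
  · intro j hj
    rw [Finsupp.mem_support_iff] at hj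
    simp only [Finset.mem_range]
    by_contra hc
    exact hj (hN j (le_of_not_gt hc))

end SkewAux

namespace SkewAux
variable {A : Type*} [Ring A] {θ : A →+* A} {δ : A →+ A} {R : Type*} [Ring R]
variable (S : SkewPolyRing A θ δ R)

lemma coeff_X_pow_mul_C (i : ℕ) (a : A) :
    (∀ m, i < m → S.coeff (S.X ^ i * S.C a) m = 0) ∧
      S.coeff (S.X ^ i * S.C a) i = θ^[i] a := by
  induction i with
  | zero =>
    constructor
    · intro m hm
      have : S.X ^ 0 * S.C a = S.C a * S.X ^ 0 := by simp
      rw [this, coeff_monomial, if_neg (by omega)]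
    · have : S.X ^ 0 * S.C a = S.C a * S.X ^ 0 := by simp
      rw [this, coeff_monomial]
      simp
  | succ i ih =>
    have hy : S.X ^ i * S.C a =
        ∑ j ∈ Finset.range (i + 1), S.C (S.coeff (S.X ^ i * S.C a) j) * S.X ^ j := by
      apply eq_sum_range
      intro j hj
      exact ih.1 j (by omega)
    have key : S.X ^ (i + 1) * S.C a =
        ∑ j ∈ Finset.range (i + 1),
          (S.C (θ (S.coeff (S.X ^ i * S.C a) j)) * S.X ^ (j + 1)
            + S.C (δ (S.coeff (S.X ^ i * S.C a) j)) * S.X ^ j) := by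
      rw [pow_succ', mul_assoc]
      conv_lhs => rw [hy]
      rw [Finset.mul_sum]
      refine Finset.sum_congr rfl fun j _ => ?_
      rw [← mul_assoc, S.X_mul, add_mul, mul_assoc, ← pow_succ']
    have coeff_key : ∀ m, S.coeff (S.X ^ (i + 1) * S.C a) m =
        ∑ j ∈ Finset.range (i + 1),
          ((if j + 1 = m then θ (S.coeff (S.X ^ i * S.C a) j) else 0)
            + (if j = m then δ (S.coeff (S.X ^ i * S.C a) j) else 0)) := by
      intro m
      rw [← coeffHom_apply, key, map_sum]
      refine Finset.sum_congr rfl fun j _ => ?_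
      rw [map_add, coeffHom_apply, coeffHom_apply, coeff_monomial, coeff_monomial]
    constructor
    · intro m hm
      rw [coeff_key]
      apply Finset.sum_eq_zero
      intro j hj
      rw [Finset.mem_range] at hj
      rw [if_neg (by omega), if_neg (by omega), add_zero]
    · rw [coeff_key]
      rw [Finset.sum_eq_single i]
      · rw [if_pos rfl, if_neg (by omega), add_zero, ih.2,
          Function.iterate_succ_apply']
      · intro j hj hji
        rw [Finset.mem_range] at hj
        rw [if_neg (by omega), if_neg (by omega), add_zero]
      · intro hi
        simp at hi

lemma coeff_C_mul (a : A) (z : R) (m : ℕ) :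
    S.coeff (S.C a * z) m = a * S.coeff z m := by
  have hz : z = S.equiv (S.equiv.symm z) := (S.equiv.apply_symm_apply z).symm
  conv_lhs => rw [hz, S.equiv_apply, Finsupp.mul_sum]
  rw [← coeffHom_apply, Finsupp.sum, map_sum]
  have : ∀ i ∈ (S.equiv.symm z).support,
      coeffHom S m (S.C a * (S.C (S.equiv.symm z i) * S.X ^ i))
      = if i = m then a * S.equiv.symm z i else 0 := by
    intro i _
    rw [coeffHom_apply, ← mul_assoc, ← map_mul, coeff_monomial]
  rw [Finset.sum_congr rfl this, Finset.sum_ite_eq']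
  by_cases hm : m ∈ (S.equiv.symm z).support
  · rw [if_pos hm]; rfl
  · rw [if_neg hm, SkewPolyRing.coeff, Finsupp.notMem_support_iff.mp hm, mul_zero]

lemma coeff_mul_X_pow (z : R) (j m : ℕ) :
    S.coeff (z * S.X ^ j) m = if j ≤ m then S.coeff z (m - j) else 0 := by
  have hz : z = S.equiv (S.equiv.symm z) := (S.equiv.apply_symm_apply z).symm
  conv_lhs => rw [hz, S.equiv_apply, Finsupp.sum, Finset.sum_mul]
  rw [← coeffHom_apply, map_sum]
  have : ∀ i ∈ (S.equiv.symm z).support,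
      coeffHom S m (S.C (S.equiv.symm z i) * S.X ^ i * S.X ^ j)
      = if i = m - j ∧ j ≤ m then S.equiv.symm z i else 0 := by
    intro i _
    rw [coeffHom_apply, mul_assoc, ← pow_add, coeff_monomial]
    by_cases h : i + j = m
    · rw [if_pos h, if_pos ⟨by omega, by omega⟩]
    · rw [if_neg h, if_neg (by omega)]
  rw [Finset.sum_congr rfl this]
  by_cases hjm : j ≤ m
  · simp only [hjm, and_true]
    rw [Finset.sum_ite_eq', if_pos trivial]
    by_cases hm : m - j ∈ (S.equiv.symm z).support
    · rw [if_pos hm]; rfl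
    · rw [if_neg hm, SkewPolyRing.coeff, Finsupp.notMem_support_iff.mp hm]
  · simp [hjm]

/-- Key lemma: bounds and top coefficient of a product. -/
lemma coeff_mul_top (a b : R) (da db : ℕ)
    (ha : ∀ i, da < i → S.coeff a i = 0) (hb : ∀ j, db < j → S.coeff b j = 0) :
    (∀ m, da + db < m → S.coeff (a * b) m = 0) ∧
      S.coeff (a * b) (da + db) = S.coeff a da * θ^[da] (S.coeff b db) := by
  have hae : a = ∑ i ∈ Finset.range (da + 1), S.C (S.coeff a i) * S.X ^ i :=
    eq_sum_range S a (da + 1) fun j hj => ha j (by omega)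
  have hbe : b = ∑ j ∈ Finset.range (db + 1), S.C (S.coeff b j) * S.X ^ j :=
    eq_sum_range S b (db + 1) fun j hj => hb j (by omega)
  have hab : ∀ m, S.coeff (a * b) m =
      ∑ i ∈ Finset.range (da + 1), ∑ j ∈ Finset.range (db + 1),
        S.coeff a i * (if j ≤ m then S.coeff (S.X ^ i * S.C (S.coeff b j)) (m - j) else 0) := by
    intro m
    conv_lhs => rw [hae, hbe]
    rw [Finset.sum_mul, ← coeffHom_apply, map_sum]
    refine Finset.sum_congr rfl fun i _ => ?_
    rw [Finset.mul_sum, map_sum]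
    refine Finset.sum_congr rfl fun j _ => ?_
    rw [coeffHom_apply]
    have : S.C (S.coeff a i) * S.X ^ i * (S.C (S.coeff b j) * S.X ^ j)
        = S.C (S.coeff a i) * ((S.X ^ i * S.C (S.coeff b j)) * S.X ^ j) := by
      rw [mul_assoc, ← mul_assoc (S.X ^ i)]
    rw [this, coeff_C_mul, coeff_mul_X_pow]
  constructor
  · intro m hm
    rw [hab]
    apply Finset.sum_eq_zero; intro i hi
    apply Finset.sum_eq_zero; intro j hj
    rw [Finset.mem_range] at hi hj
    by_cases hjm : j ≤ m
    · rw [if_pos hjm, (coeff_X_pow_mul_C S i _).1 (m - j) (by omega), mul_zero]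
    · rw [if_neg hjm, mul_zero]
  · rw [hab, Finset.sum_eq_single da]
    · rw [Finset.sum_eq_single db]
      · rw [if_pos (by omega)]
        have : da + db - db = da := by omega
        rw [this, (coeff_X_pow_mul_C S da _).2]
      · intro j hj hjdb
        rw [Finset.mem_range] at hj
        rw [if_pos (by omega), (coeff_X_pow_mul_C S da _).1 _ (by omega), mul_zero]
      · intro hdb; simp at hdb
    · intro i hi hida
      rw [Finset.mem_range] at hi
      apply Finset.sum_eq_zero; intro j hj
      rw [Finset.mem_range] at hj
      by_cases hjm : j ≤ da + db
      · rw [if_pos hjm, (coeff_X_pow_mul_C S i _).1 _ (by omega), mul_zero]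
      · rw [if_neg hjm, mul_zero]
    · intro hda; simp at hda

end SkewAux

namespace SkewAux
variable {A : Type*} [Ring A] {θ : A →+* A} {δ : A →+ A} {R : Type*} [Ring R]
variable (S : SkewPolyRing A θ δ R)

lemma coeff_eq_zero_of_deg_le (x : R) (N : ℕ) (hx : S.deg x ≤ (N : WithBot ℕ)) :
    ∀ i, N < i → S.coeff x i = 0 := by
  intro i hi
  rw [SkewPolyRing.coeff, ← Finsupp.notMem_support_iff]
  intro hmem
  have := Finset.le_max hmem
  rw [SkewPolyRing.deg] at hx
  have h2 : (i : WithBot ℕ) ≤ (N : WithBot ℕ) := le_trans this hx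
  have h3 : i ≤ N := by exact_mod_cast h2
  omega

lemma exists_ne_top (x : R) (hx : x ≠ 0) :
    S.coeff x (S.natDeg x) ≠ 0 ∧ ∀ i, S.natDeg x < i → S.coeff x i = 0 := by
  have hs : (S.equiv.symm x).support.Nonempty := by
    rw [Finsupp.support_nonempty_iff]
    intro h0
    exact hx (by rw [← S.equiv.apply_symm_apply x, h0, equiv_zero])
  have hmax : S.deg x = ((S.equiv.symm x).support.max' hs : WithBot ℕ) := by
    rw [SkewPolyRing.deg]
    exact_mod_cast (Finset.coe_max' hs).symm
  have hnat : S.natDeg x = (S.equiv.symm x).support.max' hs := by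
    rw [SkewPolyRing.natDeg, hmax]; rfl
  constructor
  · rw [hnat, SkewPolyRing.coeff, ← Finsupp.mem_support_iff]
    exact Finset.max'_mem _ hs
  · intro i hi
    rw [hnat] at hi
    rw [SkewPolyRing.coeff, ← Finsupp.notMem_support_iff]
    intro hmem
    exact absurd (Finset.le_max' _ i hmem) (by omega)

lemma isUnit_iterate (d : ℕ) {u : A} (hu : IsUnit u) : IsUnit (θ^[d] u) := by
  induction d with
  | zero => simpa
  | succ d ih => rw [Function.iterate_succ_apply']; exact ih.map θ

lemma iterate_one (d : ℕ) : θ^[d] (1 : A) = 1 := by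
  induction d with
  | zero => rfl
  | succ d ih => rw [Function.iterate_succ_apply', ih, map_one]

/-- coefficients of a vector polynomial -/
lemma coeff_vec {n : ℕ} (v : Fin n → A) (m : ℕ) :
    S.coeff (∑ i : Fin n, S.C (v i) * S.X ^ (i : ℕ)) m
      = if h : m < n then v ⟨m, h⟩ else 0 := by
  rw [← coeffHom_apply, map_sum]
  simp only [coeffHom_apply, coeff_monomial]
  by_cases h : m < n
  · rw [dif_pos h, Finset.sum_eq_single ⟨m, h⟩]
    · rw [if_pos rfl]
    · intro i _ hi
      rw [if_neg]
      intro hc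
      exact hi (Fin.ext hc)
    · intro hmem; simp at hmem
  · rw [dif_neg h]
    apply Finset.sum_eq_zero
    intro i _
    rw [if_neg]
    intro hc
    omega

end SkewAux

open SkewAux

/-- Let `A` be a finite ring, `f ∈ R = A[X; θ, δ]` monic of degree `n`
with `f = h * g = g * ħ`, `deg g = n - k`, `deg ħ = k`, and the leading coefficient of
`ħ` invertible. Let `M` be the `n × n` matrix over `A` whose `i`-th row is the
coefficient vector of the remainder of `X^(i-1) * ħ` under right division by `f`.
Then the vector representation `C ⊆ Aⁿ` of `𝒞 = Rg/Rf` is the left kernel of `M`: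
`C = { w ∈ Aⁿ : w ᵥ* M = 0 }`. -/
theorem code_eq_leftKernel
    {A R : Type*} [Ring A] [Nontrivial A] [Finite A] [Ring R]
    (θ : A →+* A) (δ : A →+ A)
    (hδ : ∀ a b : A, δ (a * b) = δ a * b + θ a * δ b)
    (S : SkewPolyRing A θ δ R)
    (f g h hbar : R) (n k : ℕ) (hkn : k ≤ n)
    (hdegf : S.deg f = (n : WithBot ℕ)) (hmf : S.coeff f n = 1)
    (h1 : f = h * g) (h2 : f = g * hbar)
    (hdegg : S.deg g = ((n - k : ℕ) : WithBot ℕ))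
    (hdeghbar : S.deg hbar = (k : WithBot ℕ))
    (hlc : IsUnit (S.coeff hbar k))
    (M : Matrix (Fin n) (Fin n) A)
    (hM : ∀ i : Fin n, ∃ q : R,
      S.X ^ (i : ℕ) * hbar = q * f + ∑ j : Fin n, S.C (M i j) * S.X ^ (j : ℕ)) :
    ∀ w : Fin n → A,
      (∃ u : R, (∑ i : Fin n, S.C (w i) * S.X ^ (i : ℕ)) = u * g) ↔
        Matrix.vecMul w M = 0 := by
  -- degree bounds
  have hfb : ∀ i, n < i → S.coeff f i = 0 :=
    coeff_eq_zero_of_deg_le S f n (le_of_eq hdegf)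
  have hhbarb : ∀ i, k < i → S.coeff hbar i = 0 :=
    coeff_eq_zero_of_deg_le S hbar k (le_of_eq hdeghbar)
  intro w
  choose q hq using hM
  set p : R := ∑ i : Fin n, S.C (w i) * S.X ^ (i : ℕ) with hp
  set Q : R := ∑ i : Fin n, S.C (w i) * q i with hQ
  set r : R := ∑ j : Fin n, S.C (Matrix.vecMul w M j) * S.X ^ (j : ℕ) with hr
  -- key identity p * hbar = Q * f + r
  have key : p * hbar = Q * f + r := by
    have step : ∀ i : Fin n, S.C (w i) * S.X ^ (i : ℕ) * hbar
        = S.C (w i) * q i * f + ∑ j : Fin n, S.C (w i * M i j) * S.X ^ (j : ℕ) := by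
      intro i
      rw [mul_assoc, hq i, mul_add, mul_assoc]
      congr 1
      rw [Finset.mul_sum]
      refine Finset.sum_congr rfl fun j _ => ?_
      rw [← mul_assoc, ← map_mul]
    rw [hp, Finset.sum_mul, Finset.sum_congr rfl (fun i _ => step i),
      Finset.sum_add_distrib]
    congr 1
    · rw [hQ, Finset.sum_mul]
    · rw [hr]
      conv_lhs => rw [Finset.sum_comm]
      refine Finset.sum_congr rfl fun j _ => ?_
      rw [← Finset.sum_mul, ← map_sum]
      congr 2
  have hrc : ∀ m : ℕ, S.coeff r m = if hm : m < n then Matrix.vecMul w M ⟨m, hm⟩ else 0 :=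
    fun m => coeff_vec S _ m
  constructor
  · rintro ⟨u, hu⟩
    have huf : (u - Q) * f = r := by
      have huf2 : u * f = Q * f + r := by
        conv_lhs => rw [h2, ← mul_assoc, ← hu]
        exact key
      rw [sub_mul, huf2, add_sub_cancel_left]
    have huQ : u - Q = 0 := by
      by_contra hne
      obtain ⟨hlcne, hbound⟩ := exists_ne_top S (u - Q) hne
      have := (coeff_mul_top S (u - Q) f (S.natDeg (u - Q)) n hbound hfb).2
      rw [hmf, iterate_one, mul_one, huf] at this
      rw [hrc] at this
      rw [dif_neg (by omega)] at this
      exact hlcne this.symm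
    have hr0 : r = 0 := by rw [← huf, huQ, zero_mul]
    funext j
    have := hrc j
    rw [hr0] at this
    have hz : S.coeff (0 : R) (j : ℕ) = 0 := by
      rw [SkewPolyRing.coeff, symm_zero]; rfl
    rw [hz, dif_pos j.isLt] at this
    simpa using this.symm
  · intro hw
    have hr0 : r = 0 := by
      rw [hr, hw]
      simp
    have hcancel : (p - Q * g) * hbar = 0 := by
      rw [sub_mul, key, hr0, add_zero, mul_assoc, ← h2, sub_self]
    have : p - Q * g = 0 := by
      by_contra hne
      obtain ⟨hlcne, hbound⟩ := exists_ne_top S (p - Q * g) hne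
      have htop := (coeff_mul_top S (p - Q * g) hbar (S.natDeg (p - Q * g)) k hbound hhbarb).2
      rw [hcancel] at htop
      have hz : S.coeff (0 : R) (S.natDeg (p - Q * g) + k) = 0 := by
        rw [SkewPolyRing.coeff, symm_zero]; rfl
      rw [hz] at htop
      have hun : IsUnit (θ^[S.natDeg (p - Q * g)] (S.coeff hbar k)) :=
        isUnit_iterate _ hlc
      exact hlcne ((IsUnit.mul_left_eq_zero hun).mp htop.symm)
    exact ⟨Q, by rw [← sub_eq_zero]; exact this⟩
end

section
/- Let A be a finite ring, B ⊆ A a subring such that A is a free B-module with basis a₁, …, a_s, and let θ be a unitary endomorphism of A and δ a θ-derivation of A such that θ(B) ⊆ B, δ(B) ⊆ B, and the restrictions θ|_B and δ|_B are polynomial maps on B. Then there exist multivariate polynomials P₁, …, P_s and Q₁, …, Q_s in B[Y₁, …, Y_s] such that for all y₁, …, y_s ∈ B: θ(Σⱼ yⱼaⱼ) = Σⱼ Pⱼ(y₁,…,y_s)·aⱼ and δ(Σⱼ yⱼaⱼ) = Σⱼ Qⱼ(y₁,…,y_s)·aⱼ. -/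
lemma eval_polyaeval {s : ℕ} {B : Type*} [CommRing B] (p : Polynomial B)
    (y : Fin s → B) (j : Fin s) :
    MvPolynomial.eval y (Polynomial.aeval (MvPolynomial.X j : MvPolynomial (Fin s) B) p)
      = Polynomial.eval (y j) p := by
  have : (MvPolynomial.eval y).comp (Polynomial.aeval (MvPolynomial.X j :
      MvPolynomial (Fin s) B)).toRingHom = Polynomial.evalRingHom (y j) := by
    apply Polynomial.ringHom_ext
    · intro b; simp
    · simp
  have h := RingHom.congr_fun this p
  simpa using h

/-- Let `A` be a finite (commutative) ring, `B ⊆ A` a subring such that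
`A` is a free `B`-module with basis `a₁, …, a_s`, and let `θ` be a unitary endomorphism
and `δ` a `θ`-derivation of `A` with `θ(B) ⊆ B`, `δ(B) ⊆ B` whose restrictions to `B` are
polynomial maps. Then there are multivariate polynomials `P₁, …, P_s, Q₁, …, Q_s` over
`B` such that `θ(Σ yⱼ aⱼ) = Σ Pⱼ(y) aⱼ` and `δ(Σ yⱼ aⱼ) = Σ Qⱼ(y) aⱼ` for all
`y₁, …, y_s ∈ B`. -/
theorem theta_delta_are_polynomial_in_coordinates
    {A : Type*} [CommRing A] [Finite A] (B : Subring A) (s : ℕ)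
    (a : Fin s → A)
    (hbasis : ∀ x : A, ∃! y : Fin s → B, x = ∑ j, (y j : A) * a j)
    (θ : A →+* A) (δ : A →+ A)
    (hδ : ∀ x y : A, δ (x * y) = δ x * y + θ x * δ y)
    (hθB : ∀ b ∈ B, θ b ∈ B) (hδB : ∀ b ∈ B, δ b ∈ B)
    (pθ : Polynomial B) (hpθ : ∀ b : B, θ (b : A) = ((Polynomial.eval b pθ : B) : A))
    (pδ : Polynomial B) (hpδ : ∀ b : B, δ (b : A) = ((Polynomial.eval b pδ : B) : A)) :
    ∃ P Q : Fin s → MvPolynomial (Fin s) B,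
      ∀ y : Fin s → B,
        θ (∑ j, (y j : A) * a j)
            = ∑ j, ((MvPolynomial.eval y (P j) : B) : A) * a j ∧
        δ (∑ j, (y j : A) * a j)
            = ∑ j, ((MvPolynomial.eval y (Q j) : B) : A) * a j := by
  -- coordinates of θ(a j) and δ(a j)
  choose c hc _ using fun j => hbasis (θ (a j))
  choose d hd _ using fun j => hbasis (δ (a j))
  refine ⟨fun k => ∑ j, Polynomial.aeval (MvPolynomial.X j) pθ * MvPolynomial.C (c j k),
         fun k => Polynomial.aeval (MvPolynomial.X k) pδ
           + ∑ j, Polynomial.aeval (MvPolynomial.X j) pθ * MvPolynomial.C (d j k),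
         fun y => ⟨?_, ?_⟩⟩
  · calc θ (∑ j, (y j : A) * a j) = ∑ j, θ (y j : A) * θ (a j) := by
          simp [map_sum]
      _ = ∑ j, ∑ k, ((Polynomial.eval (y j) pθ : B) : A) * ((c j k : A) * a k) := by
          refine Finset.sum_congr rfl fun j _ => ?_
          rw [hpθ, hc j, Finset.mul_sum]
      _ = ∑ k, ((MvPolynomial.eval y
            (∑ j, Polynomial.aeval (MvPolynomial.X j) pθ * MvPolynomial.C (c j k)) : B) : A)
            * a k := by
          rw [Finset.sum_comm]
          refine Finset.sum_congr rfl fun k _ => ?_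
          rw [map_sum]
          push_cast [Finset.sum_mul]
          refine Finset.sum_congr rfl fun j _ => ?_
          rw [map_mul, MvPolynomial.eval_C, eval_polyaeval]
          push_cast
          ring
  · calc δ (∑ j, (y j : A) * a j) = ∑ j, (δ (y j : A) * a j + θ (y j : A) * δ (a j)) := by
          rw [map_sum]; exact Finset.sum_congr rfl fun j _ => hδ _ _
      _ = ∑ j, (((Polynomial.eval (y j) pδ : B) : A) * a j
            + ∑ k, ((Polynomial.eval (y j) pθ : B) : A) * ((d j k : A) * a k)) := by
          refine Finset.sum_congr rfl fun j _ => ?_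
          rw [hpδ, hpθ, hd j, Finset.mul_sum]
      _ = ∑ k, (((Polynomial.eval (y k) pδ : B) : A)
            + ∑ j, ((Polynomial.eval (y j) pθ : B) : A) * (d j k : A)) * a k := by
          rw [Finset.sum_add_distrib, Finset.sum_comm]
          simp [Finset.sum_add_distrib, Finset.sum_mul, add_mul, mul_assoc]
      _ = ∑ k, ((MvPolynomial.eval y
            (Polynomial.aeval (MvPolynomial.X k) pδ
              + ∑ j, Polynomial.aeval (MvPolynomial.X j) pθ * MvPolynomial.C (d j k)) : B) : A)
            * a k := by
          refine Finset.sum_congr rfl fun k _ => ?_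
          rw [map_add, map_sum]
          simp only [map_mul, MvPolynomial.eval_C, eval_polyaeval]
          push_cast [Finset.sum_mul, add_mul]
          rfl
end

section
/- Let A = 𝔽₂[u]/(u²) and let δ : A → A be the (Id-)derivation determined by δ(1) = 0 and δ(u) = 1, i.e., δ(α + βu) = β for α, β ∈ 𝔽₂ (formal differentiation with respect to u). Then δ is an additive map satisfying δ(ab) = δ(a)b + aδ(b) for all a, b ∈ A, but δ is not a polynomial map on A: there is no polynomial p ∈ A[x] with p evaluated at a equal to δ(a) for all a ∈ A. -/
/-- The commutative local ring `A = 𝔽₂[u]/(u²)` of order 4. -/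
abbrev FourRingU : Type :=
  Polynomial (ZMod 2) ⧸ Ideal.span ({Polynomial.X ^ 2} : Set (Polynomial (ZMod 2)))

/-- The element `u` of `𝔽₂[u]/(u²)`. -/
noncomputable def uElt : FourRingU := Ideal.Quotient.mk _ Polynomial.X

/-- The additive map `f ↦ mk (f')` downstairs-to-be. -/
noncomputable def Dmap : Polynomial (ZMod 2) →+ FourRingU :=
  ((Ideal.Quotient.mk (Ideal.span ({Polynomial.X ^ 2} : Set (Polynomial (ZMod 2))))) :
      Polynomial (ZMod 2) →+* FourRingU).toAddMonoidHom.comp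
    (Polynomial.derivative (R := ZMod 2)).toAddMonoidHom

lemma Dmap_ker : ∀ f ∈ (Ideal.span ({Polynomial.X ^ 2} : Set (Polynomial (ZMod 2)))).toAddSubgroup,
    Dmap f = 0 := by
  intro f hf
  rw [Submodule.mem_toAddSubgroup, Ideal.mem_span_singleton] at hf
  obtain ⟨g, rfl⟩ := hf
  have : Polynomial.derivative (Polynomial.X ^ 2 * g) = Polynomial.X ^ 2 * Polynomial.derivative g := by
    have h2 : ((2:ℕ):ZMod 2) = 0 := rfl
    rw [Polynomial.derivative_mul, Polynomial.derivative_X_pow, h2]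
    simp
  simp only [Dmap, AddMonoidHom.comp_apply, LinearMap.toAddMonoidHom_coe, this]
  rw [RingHom.toAddMonoidHom_eq_coe, AddMonoidHom.coe_coe, Ideal.Quotient.eq_zero_iff_mem]
  exact Ideal.mem_span_singleton.mpr ⟨Polynomial.derivative g, rfl⟩

/-- Formal differentiation with respect to `u` on `A = 𝔽₂[u]/(u²)`. -/
noncomputable def deltaMap : FourRingU →+ FourRingU :=
  QuotientAddGroup.lift _ Dmap Dmap_ker

lemma deltaMap_mk (f : Polynomial (ZMod 2)) :
    deltaMap (Ideal.Quotient.mk _ f) = Ideal.Quotient.mk _ (Polynomial.derivative f) := rfl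

/-- On `A = 𝔽₂[u]/(u²)` there is an additive map `δ` with `δ(u) = 1`
(formal differentiation with respect to `u`, i.e. `δ(α + βu) = β`) which is a derivation,
`δ(ab) = δ(a)b + aδ(b)`, but which is not a polynomial map on `A`: no polynomial
`p ∈ A[x]` evaluates to `δ` on all of `A`. -/
theorem derivation_not_polynomial_map :
    ∃ δ : FourRingU →+ FourRingU,
      δ uElt = 1 ∧
      (∀ a b : FourRingU, δ (a * b) = δ a * b + a * δ b) ∧
      ¬ ∃ p : Polynomial FourRingU, ∀ a : FourRingU, Polynomial.eval a p = δ a := by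
  refine ⟨deltaMap, ?_, ?_, ?_⟩
  · show deltaMap (Ideal.Quotient.mk _ Polynomial.X) = 1
    rw [deltaMap_mk, Polynomial.derivative_X, map_one]
  · intro a b
    obtain ⟨f, rfl⟩ := Ideal.Quotient.mk_surjective a
    obtain ⟨g, rfl⟩ := Ideal.Quotient.mk_surjective b
    rw [← map_mul, deltaMap_mk, deltaMap_mk, deltaMap_mk, Polynomial.derivative_mul,
      map_add, map_mul, map_mul]
  · rintro ⟨p, hp⟩
    have hu2 : uElt * uElt = 0 := by
      show (Ideal.Quotient.mk _ Polynomial.X) * (Ideal.Quotient.mk _ Polynomial.X) = 0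
      rw [← map_mul, Ideal.Quotient.eq_zero_iff_mem, ← pow_two]
      exact Ideal.subset_span rfl
    have hu0 : uElt ≠ 0 := by
      show (Ideal.Quotient.mk _ Polynomial.X) ≠ 0
      rw [Ne, Ideal.Quotient.eq_zero_iff_mem, Ideal.mem_span_singleton]
      intro hdvd
      have h1 := Polynomial.natDegree_le_of_dvd hdvd Polynomial.X_ne_zero
      simp [Polynomial.natDegree_X_pow, Polynomial.natDegree_X] at h1
    have h0 : p.coeff 0 = 0 := by
      rw [Polynomial.coeff_zero_eq_eval_zero, hp 0, map_zero]
    obtain ⟨q, rfl⟩ := Polynomial.X_dvd_iff.mpr h0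
    have h1 : Polynomial.eval uElt (Polynomial.X * q) = 1 := by
      rw [hp uElt]
      show deltaMap (Ideal.Quotient.mk _ Polynomial.X) = 1
      rw [deltaMap_mk, Polynomial.derivative_X, map_one]
    rw [Polynomial.eval_mul, Polynomial.eval_X] at h1
    have := congrArg (uElt * ·) h1
    simp only [mul_one, ← mul_assoc, hu2, zero_mul] at this
    exact hu0 this.symm
end

section
/- Let A = 𝔽₂[v]/(v² + v). For every unitary ring endomorphism θ of A and every θ-derivation δ of A, the derivation δ is inner: there exists β ∈ A such that δ(x) = βx − θ(x)β for all x ∈ A. -/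
/-- The commutative ring `A = 𝔽₂[v]/(v² + v)` of order 4. -/
abbrev FourRingV : Type :=
  Polynomial (ZMod 2) ⧸ Ideal.span ({Polynomial.X ^ 2 + Polynomial.X} : Set (Polynomial (ZMod 2)))

/-- For every unitary ring endomorphism `θ` of `A = 𝔽₂[v]/(v² + v)` and
every `θ`-derivation `δ` of `A`, the derivation `δ` is inner: there is `β ∈ A` with
`δ(x) = βx − θ(x)β` for all `x ∈ A`. -/
theorem every_derivation_inner_F2v
    (θ : FourRingV →+* FourRingV) (δ : FourRingV →+ FourRingV)
    (hδ : ∀ a b : FourRingV, δ (a * b) = δ a * b + θ a * δ b) :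
    ∃ β : FourRingV, ∀ x : FourRingV, δ x = β * x - θ x * β := by
  -- characteristic 2
  have h2 : (1 : FourRingV) + 1 = 0 := by
    have hp : (1 : Polynomial (ZMod 2)) + 1 = 0 := by
      rw [← Polynomial.C_1, ← Polynomial.C_add]
      have : (1 : ZMod 2) + 1 = 0 := by decide
      rw [this, Polynomial.C_0]
    calc (1 : FourRingV) + 1
        = Ideal.Quotient.mk _ ((1 : Polynomial (ZMod 2)) + 1) := by
          rw [map_add, map_one]
      _ = 0 := by rw [hp, map_zero]
  have hchar : ∀ a : FourRingV, a + a = 0 := fun a => by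
    calc a + a = (1 + 1) * a := by ring
      _ = 0 := by rw [h2, zero_mul]
  have hneg : ∀ a : FourRingV, -a = a := fun a => by
    rw [neg_eq_iff_add_eq_zero, hchar]
  -- δ 1 = 0
  have h1 : δ 1 = 0 := by
    have h := hδ 1 1
    simp only [mul_one, θ.map_one, one_mul] at h
    exact (left_eq_add).mp h
  set v : FourRingV := Ideal.Quotient.mk _ Polynomial.X with hv
  have hv2 : v * v = v := by
    have hz : (Ideal.Quotient.mk (Ideal.span
        ({Polynomial.X ^ 2 + Polynomial.X} : Set (Polynomial (ZMod 2))))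
        (Polynomial.X ^ 2 + Polynomial.X)) = 0 := by
      rw [Ideal.Quotient.eq_zero_iff_mem]
      exact Ideal.subset_span (Set.mem_singleton _)
    rw [map_add, map_pow] at hz
    have : v * v + v = 0 := by rw [← sq]; exact hz
    have := add_eq_zero_iff_eq_neg.mp this
    rw [hneg] at this
    exact this
  refine ⟨δ v, fun x => ?_⟩
  -- the key predicate
  set β := δ v with hβ
  have key : ∀ p : Polynomial (ZMod 2),
      δ (Ideal.Quotient.mk _ p) = β * (Ideal.Quotient.mk _ p)
        - θ (Ideal.Quotient.mk _ p) * β := by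
    intro p
    induction p using Polynomial.induction_on with
    | C a =>
      fin_cases a
      · change δ (Ideal.Quotient.mk _ (Polynomial.C (0 : ZMod 2))) = β * Ideal.Quotient.mk _ (Polynomial.C (0 : ZMod 2)) - θ (Ideal.Quotient.mk _ (Polynomial.C (0 : ZMod 2))) * β
        simp
      · change δ (Ideal.Quotient.mk _ (Polynomial.C (1 : ZMod 2))) = β * Ideal.Quotient.mk _ (Polynomial.C (1 : ZMod 2)) - θ (Ideal.Quotient.mk _ (Polynomial.C (1 : ZMod 2))) * β
        simp [h1]
    | add p q hp hq =>
      simp only [map_add]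
      rw [hp, hq]; ring
    | monomial n a ih =>
      have hx : δ v = β * v - θ v * β := by
        have h := hδ v v
        rw [hv2, ← hβ, mul_comm (δ v) v, ← hβ] at h
        rw [← hβ, sub_eq_add_neg, hneg, mul_comm β v]
        exact h
      have step : ∀ y z : FourRingV,
          δ y = β * y - θ y * β → δ z = β * z - θ z * β →
          δ (y * z) = β * (y * z) - θ (y * z) * β := by
        intro y z hy hz
        rw [hδ, hy, hz, map_mul]
        ring
      have : Polynomial.C a * Polynomial.X ^ (n + 1)
          = (Polynomial.C a * Polynomial.X ^ n) * Polynomial.X := by ring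
      rw [this, map_mul]
      exact step _ _ ih hx
  obtain ⟨p, rfl⟩ := Ideal.Quotient.mk_surjective x
  exact key p
end
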